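/- arXiv:1812.10525 — 2 statements merged into one kernel-verified Lean document; each statement's English description precedes it below -/
import Mathlib

section
/- In the K-receiver combination network with messages M_{\overline{K}} (for receivers 1,...,K−1) and M_{\overline{K−1}} (for receivers 1,...,K−2,K), any achievable rate pair satisfies R_{\overline{K}} + R_{\overline{K−1}} ≤ C_{↓_{W_{K−1}}{\overline{K}}} + C_{W_K}, where ↓_{W_{K−1}}{\overline{K}} = {S ∈ W_{K−1} : K ∉ S}. The key information-theoretic step is: for any joint distribution with independent messages and channel outputs Y_i^n = V_{W_i}^n where each component V_S takes values in a set of size 2^{C_S}, n R_{\overline{K}} ≤ H(Y_{K}^n, Y_{K−1}^n) − n R_{\overline{K−1}} + 2nε_n ≤ n C_{W_K} + n C_{↓_{W_{K−1}}{\overline{K}}} − n R_{\overline{K−1}} + 2nε_n. -/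
open Finset

/-- Achievability of a rate pair over the `K`-receiver combination network with
two order-`(K-1)` messages.  The channel input has, for each nonempty
`S ⊆ [1:K]`, a component in `V S` seen noiselessly by exactly the receivers in `S`.
Message 1 (rate `R1`, the message `M_{\bar K}`) must be decoded by receivers
`0,…,K-2` (0-indexed), and message 2 (rate `R2`, the message `M_{\bar{K-1}}`)
by all receivers except receiver `K-2` (0-indexed), i.e. by `0,…,K-3` and `K-1`.
Achievability: for every `ε > 0` there is a block code of some length `n` with
per-symbol rates at least `R1 - ε`, `R2 - ε` and average (uniform-message)
error probability at most `ε`. -/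
def TwoOrderAchievable (K : ℕ) (V : {S : Finset (Fin K) // S.Nonempty} → Type)
    [∀ S, Fintype (V S)] (R1 R2 : ℝ) : Prop :=
  ∀ ε : ℝ, 0 < ε → ∃ (n M1 M2 : ℕ), 0 < n ∧ 0 < M1 ∧ 0 < M2 ∧
    R1 - ε ≤ Real.logb 2 M1 / n ∧ R2 - ε ≤ Real.logb 2 M2 / n ∧
    ∃ (enc : Fin M1 → Fin M2 → Fin n → ∀ S : {S : Finset (Fin K) // S.Nonempty}, V S)
      (dec : ∀ i : Fin K,
        (Fin n → ∀ T : {S : {S : Finset (Fin K) // S.Nonempty} // i ∈ S.1}, V T.1) →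
          Fin M1 × Fin M2),
      ((univ.filter (fun mm : Fin M1 × Fin M2 =>
          ¬ ((∀ i : Fin K, (i : ℕ) < K - 1 →
                (dec i (fun t T => enc mm.1 mm.2 t T.1)).1 = mm.1) ∧
             (∀ i : Fin K, (i : ℕ) ≠ K - 2 →
                (dec i (fun t T => enc mm.1 mm.2 t T.1)).2 = mm.2)))).card : ℝ) ≤
        ε * (M1 * M2)

section Aux

/-- Key single-code counting bound: for any `ε ∈ (0,1)`, the rates of a code with
error probability `ε` are bounded via an injection of the correctly decoded message
pairs into the tuple of symbols seen by receivers `K-2` and `K-1` (0-indexed). -/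
lemma key_bound (K : ℕ) (hK : 2 ≤ K)
    (V : {S : Finset (Fin K) // S.Nonempty} → Type)
    [∀ S, Fintype (V S)] [∀ S, Nonempty (V S)]
    (R1 R2 : ℝ) (hach : TwoOrderAchievable K V R1 R2)
    (ε : ℝ) (hε : 0 < ε) (hε1 : ε < 1) :
    R1 + R2 ≤
      (∑ S ∈ univ.filter (fun S : {S : Finset (Fin K) // S.Nonempty} =>
          (⟨K - 2, Nat.sub_lt_self two_pos hK⟩ : Fin K) ∈ S.1 ∨ (⟨K - 1, Nat.sub_lt_self one_pos (le_trans one_le_two hK)⟩ : Fin K) ∈ S.1),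
        Real.logb 2 (Fintype.card (V S))) + 2 * ε - Real.logb 2 (1 - ε) := by
  classical
  set i2 : Fin K := ⟨K - 2, by omega⟩ with hi2
  set i1 : Fin K := ⟨K - 1, by omega⟩ with hi1
  obtain ⟨n, M1, M2, hn, hM1, hM2, hR1, hR2, enc, dec, herr⟩ := hach ε hε
  set cond : Fin M1 × Fin M2 → Prop := fun mm =>
      ((∀ i : Fin K, (i : ℕ) < K - 1 →
            (dec i (fun t T => enc mm.1 mm.2 t T.1)).1 = mm.1) ∧
         (∀ i : Fin K, (i : ℕ) ≠ K - 2 →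
            (dec i (fun t T => enc mm.1 mm.2 t T.1)).2 = mm.2)) with hcond
  set Good : Finset (Fin M1 × Fin M2) := univ.filter cond with hGood
  -- lower bound on the number of good message pairs
  have hcount : (1 - ε) * ((M1 : ℝ) * M2) ≤ (Good.card : ℝ) := by
    have hsplit := Finset.card_filter_add_card_filter_not (s := (univ : Finset (Fin M1 × Fin M2))) cond
    have hcards : (Good.card : ℝ) + ((univ.filter (fun mm => ¬ cond mm)).card : ℝ) = (M1 : ℝ) * M2 := by
      have : ((univ : Finset (Fin M1 × Fin M2)).card : ℝ) = (M1 : ℝ) * M2 := by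
        simp [Finset.card_univ]
      rw [← this]
      exact_mod_cast congrArg (Nat.cast (R := ℝ)) hsplit
    nlinarith [herr]
  -- the injection into the symbols seen by receivers i2, i1
  set f : Fin M1 × Fin M2 →
      (Fin n → ∀ T : {S : {S : Finset (Fin K) // S.Nonempty} // i2 ∈ S.1 ∨ i1 ∈ S.1}, V T.1) :=
    fun mm => fun t T => enc mm.1 mm.2 t T.1 with hf
  have hinj : Set.InjOn f ↑Good := by
    intro mm hmm mm' hmm' hfe
    simp only [hGood, Finset.coe_filter, Set.mem_setOf_eq, Finset.mem_univ, true_and] at hmm hmm'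
    have e1 : (fun t (T : {S : {S : Finset (Fin K) // S.Nonempty} // i1 ∈ S.1}) =>
        enc mm.1 mm.2 t T.1) = (fun t (T : {S : {S : Finset (Fin K) // S.Nonempty} // i1 ∈ S.1}) => enc mm'.1 mm'.2 t T.1) := by
      funext t T
      exact congrFun (congrFun hfe t) ⟨T.1, Or.inr T.2⟩
    have e2 : (fun t (T : {S : {S : Finset (Fin K) // S.Nonempty} // i2 ∈ S.1}) =>
        enc mm.1 mm.2 t T.1) = (fun t (T : {S : {S : Finset (Fin K) // S.Nonempty} // i2 ∈ S.1}) => enc mm'.1 mm'.2 t T.1) := by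
      funext t T
      exact congrFun (congrFun hfe t) ⟨T.1, Or.inl T.2⟩
    have h2 : mm.2 = mm'.2 := by
      have hne : ((i1 : ℕ) : ℕ) ≠ K - 2 := by simp [hi1]; omega
      have := hmm.2 i1 hne
      have := hmm'.2 i1 hne
      rw [← hmm.2 i1 hne, ← hmm'.2 i1 hne, e1]
    have h1 : mm.1 = mm'.1 := by
      have hlt : ((i2 : ℕ) : ℕ) < K - 1 := by simp [hi2]; omega
      rw [← hmm.1 i2 hlt, ← hmm'.1 i2 hlt, e2]
    exact Prod.ext h1 h2
  have hcard : Good.card ≤ Fintype.card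
      (Fin n → ∀ T : {S : {S : Finset (Fin K) // S.Nonempty} // i2 ∈ S.1 ∨ i1 ∈ S.1}, V T.1) := by
    rw [← Finset.card_univ]
    exact Finset.card_le_card_of_injOn f (fun a _ => Finset.mem_univ _) hinj
  -- compute the cardinality of the codomain
  set Fset : Finset {S : Finset (Fin K) // S.Nonempty} :=
    univ.filter (fun S => i2 ∈ S.1 ∨ i1 ∈ S.1) with hFset
  set P : ℕ := ∏ S ∈ Fset, Fintype.card (V S) with hP
  have hPpos : 0 < P := Finset.prod_pos (fun S _ => Fintype.card_pos)
  have hcodcard : Fintype.card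
      (Fin n → ∀ T : {S : {S : Finset (Fin K) // S.Nonempty} // i2 ∈ S.1 ∨ i1 ∈ S.1}, V T.1)
      = P ^ n := by
    rw [Fintype.card_fun, Fintype.card_pi, Fintype.card_fin]
    congr 1
    exact (Finset.prod_subtype (p := fun S : {S : Finset (Fin K) // S.Nonempty} =>
      i2 ∈ S.1 ∨ i1 ∈ S.1) Fset (fun S => by simp [hFset])
      (fun S => Fintype.card (V S))).symm
  -- main counting inequality
  have hmain : (1 - ε) * ((M1:ℝ) * M2) ≤ (P:ℝ) ^ n := by
    calc (1 - ε) * ((M1:ℝ) * M2) ≤ (Good.card : ℝ) := hcount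
    _ ≤ ((P ^ n : ℕ) : ℝ) := by exact_mod_cast hcodcard ▸ hcard
    _ = (P:ℝ) ^ n := by push_cast; ring
  have h1ε : (0:ℝ) < 1 - ε := by linarith
  have hM1R : (0:ℝ) < M1 := by exact_mod_cast hM1
  have hM2R : (0:ℝ) < M2 := by exact_mod_cast hM2
  have hPR : (0:ℝ) < P := by exact_mod_cast hPpos
  have hlog : Real.logb 2 ((1 - ε) * ((M1:ℝ) * M2)) ≤ Real.logb 2 ((P:ℝ) ^ n) :=
    (Real.logb_le_logb (by norm_num) (by positivity) (by positivity)).mpr hmain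
  rw [Real.logb_mul (ne_of_gt h1ε) (by positivity),
    Real.logb_mul (ne_of_gt hM1R) (ne_of_gt hM2R), Real.logb_pow] at hlog
  set a := Real.logb 2 (M1:ℝ) with ha
  set b := Real.logb 2 (M2:ℝ) with hb
  set c := Real.logb 2 (P:ℝ) with hc
  set d := Real.logb 2 (1 - ε) with hd
  set N := (n:ℝ) with hN
  have hNpos : (0:ℝ) < N := by rw [hN]; exact_mod_cast hn
  have hN1 : (1:ℝ) ≤ N := by rw [hN]; exact_mod_cast hn
  have hd0 : d ≤ 0 := Real.logb_nonpos (by norm_num) (by linarith) (by linarith)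
  have h3 : (a + b) / N ≤ c - d / N := by
    rw [div_le_iff₀ hNpos, sub_mul, div_mul_cancel₀ _ (ne_of_gt hNpos)]
    have hcomm : N * c = c * N := mul_comm N c
    linarith [hlog, hcomm]
  have h4 : (-d) / N ≤ -d := div_le_self (by linarith) hN1
  have eq1 : a / N + b / N = (a + b) / N := (add_div a b N).symm
  have eq2 : -(d / N) = (-d) / N := (neg_div N d).symm
  have hPsum : c = ∑ S ∈ Fset, Real.logb 2 (Fintype.card (V S)) := by
    rw [hc, hP]
    push_cast
    exact Real.logb_prod Fset (fun S => ((Fintype.card (V S) : ℕ) : ℝ))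
      (fun S _ => by positivity)
  rw [← hPsum]
  linarith [hR1, hR2, h3, h4, eq1, eq2]

end Aux

/-- Converse bound for the combination network with messages
`M_{\bar K}` and `M_{\bar{K-1}}`: every achievable rate pair satisfies
`R1 + R2 ≤ C_{↓_{W_{K-1}}{\bar K}} + C_{W_K}`, where `C_S = log₂ |V S|`,
`↓_{W_{K-1}}{\bar K}` is the family of sets containing receiver `K-1` but not
receiver `K`, and `W_K` the family of sets containing receiver `K`
(receivers `K-1`, `K` are the 0-indexed `⟨K-2,_⟩`, `⟨K-1,_⟩`). -/
theorem stmt_11 (K : ℕ) (hK : 2 ≤ K)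
    (V : {S : Finset (Fin K) // S.Nonempty} → Type)
    [∀ S, Fintype (V S)] [∀ S, Nonempty (V S)]
    (R1 R2 : ℝ) (hach : TwoOrderAchievable K V R1 R2) :
    R1 + R2 ≤
      (∑ S ∈ univ.filter (fun S : {S : Finset (Fin K) // S.Nonempty} =>
          (⟨K - 2, by omega⟩ : Fin K) ∈ S.1 ∧ (⟨K - 1, by omega⟩ : Fin K) ∉ S.1),
        Real.logb 2 (Fintype.card (V S))) +
      ∑ S ∈ univ.filter (fun S : {S : Finset (Fin K) // S.Nonempty} =>
          (⟨K - 1, by omega⟩ : Fin K) ∈ S.1),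
        Real.logb 2 (Fintype.card (V S)) := by
  classical
  set i2 : Fin K := ⟨K - 2, by omega⟩ with hi2
  set i1 : Fin K := ⟨K - 1, by omega⟩ with hi1
  set T : ℝ := ∑ S ∈ univ.filter (fun S : {S : Finset (Fin K) // S.Nonempty} =>
      i2 ∈ S.1 ∨ i1 ∈ S.1), Real.logb 2 (Fintype.card (V S)) with hT
  -- the target right-hand side equals `T`
  have hsplit :
      (∑ S ∈ univ.filter (fun S : {S : Finset (Fin K) // S.Nonempty} =>
          i2 ∈ S.1 ∧ i1 ∉ S.1), Real.logb 2 (Fintype.card (V S))) +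
      (∑ S ∈ univ.filter (fun S : {S : Finset (Fin K) // S.Nonempty} =>
          i1 ∈ S.1), Real.logb 2 (Fintype.card (V S))) = T := by
    rw [hT]
    have hor : (univ.filter (fun S : {S : Finset (Fin K) // S.Nonempty} =>
        i2 ∈ S.1 ∨ i1 ∈ S.1)) =
        (univ.filter (fun S : {S : Finset (Fin K) // S.Nonempty} =>
          (i2 ∈ S.1 ∧ i1 ∉ S.1) ∨ i1 ∈ S.1)) := by
      apply Finset.filter_congr
      intro S _
      constructor
      · rintro (h | h)
        · by_cases h1 : i1 ∈ S.1
          · exact Or.inr h1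
          · exact Or.inl ⟨h, h1⟩
        · exact Or.inr h
      · rintro (⟨h, _⟩ | h)
        · exact Or.inl h
        · exact Or.inr h
    rw [hor, Finset.filter_or, Finset.sum_union]
    rw [Finset.disjoint_left]
    intro S hS hS'
    simp only [Finset.mem_filter] at hS hS'
    exact hS.2.2 hS'.2
  rw [hsplit]
  -- take the limit ε → 0⁺ in the key bound
  have hkey : ∀ᶠ ε in nhdsWithin (0:ℝ) (Set.Ioi 0),
      R1 + R2 ≤ T + 2 * ε - Real.logb 2 (1 - ε) := by
    have h1 : ∀ᶠ ε in nhdsWithin (0:ℝ) (Set.Ioi 0), ε < 1 :=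
      Filter.Eventually.filter_mono nhdsWithin_le_nhds (eventually_lt_nhds one_pos)
    filter_upwards [self_mem_nhdsWithin, h1] with ε hε hε1
    exact key_bound K hK V R1 R2 hach ε hε hε1
  have htend : Filter.Tendsto (fun ε : ℝ => T + 2 * ε - Real.logb 2 (1 - ε))
      (nhdsWithin (0:ℝ) (Set.Ioi 0)) (nhds T) := by
    have hca : ContinuousAt (fun ε : ℝ => T + 2 * ε - Real.logb 2 (1 - ε)) 0 := by
      have hlog : ContinuousAt (fun ε : ℝ => Real.log (1 - ε)) 0 :=
        (Real.continuousAt_log (by norm_num)).comp (by fun_prop)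
      have hlogb : ContinuousAt (fun ε : ℝ => Real.logb 2 (1 - ε)) 0 := by
        simp only [Real.logb]
        exact hlog.div_const _
      exact (continuousAt_const.add (by fun_prop)).sub hlogb
    have h := (hca.continuousWithinAt (s := Set.Ioi 0)).tendsto
    simpa using h
  exact ge_of_tendsto htend hkey
end

section
/- In the K-receiver combination network with messages M_{\overline{K}} and M_{\overline{K−1}}, any achievable rate pair satisfies, for every j ∈ {1,...,K−2}: 2R_{\overline{K−1}} + 2R_{\overline{K}} ≤ C_{↓_{W_j}{\overline{K−1},\overline{K}}} + C_{W_K} + C_{W_{K−1}}, where ↓_{W_j}{\overline{K−1},\overline{K}} = {S ∈ W_j : K ∉ S or K−1 ∉ S}. A key combinatorial fact used is W_K ∩ W_{K−1} ∩ W_j = ↑_{W_j}{K−1,K} = {S ∈ W_j : {K−1,K} ⊆ S} and C_{W_j} = C_{↓_{W_j}{\overline{K−1},\overline{K}}} + C_{↑_{W_j}{K−1.K}}. -/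
open Finset

private lemma real_le_of_forall_pos' {a b : ℝ} (h : ∀ δ : ℝ, 0 < δ → a ≤ b + δ) : a ≤ b := by
  by_contra hc
  push_neg at hc
  have := h ((a - b)/2) (by linarith)
  linarith

private lemma neg_logb_le' {ε : ℝ} (h0 : 0 < ε) (h1 : ε ≤ 1/2) :
    -Real.logb 2 (1 - ε) ≤ 3 * ε := by
  have h2 : (0:ℝ) < 1 - ε := by linarith
  have hlog : -Real.log (1 - ε) ≤ 2 * ε := by
    have hx := Real.log_le_sub_one_of_pos (x := (1-ε)⁻¹) (by positivity)
    rw [Real.log_inv] at hx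
    have A : (1-ε) * (1-ε)⁻¹ = 1 := mul_inv_cancel₀ h2.ne'
    have B : (0:ℝ) < (1-ε)⁻¹ := by positivity
    have hinv : (1-ε)⁻¹ - 1 ≤ 2*ε := by nlinarith
    linarith
  have hl2 : (0.6931471803:ℝ) < Real.log 2 := Real.log_two_gt_d9
  rw [Real.logb, ← neg_div]
  rw [div_le_iff₀ (by linarith)]
  nlinarith [mul_nonneg h0.le (by linarith : (0:ℝ) ≤ 3*Real.log 2 - 2)]

section Aux

variable {K : ℕ}
  {V : {S : Finset (Fin K) // S.Nonempty} → Type}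
  [∀ S, Fintype (V S)] [∀ S, Nonempty (V S)]

lemma split_sum' (j a b : Fin K) (f : {S : Finset (Fin K) // S.Nonempty} → ℝ) :
    (∑ S ∈ univ.filter (fun S : {S : Finset (Fin K) // S.Nonempty} => j ∈ S.1), f S) =
      (∑ S ∈ univ.filter (fun S : {S : Finset (Fin K) // S.Nonempty} =>
          j ∈ S.1 ∧ (a ∉ S.1 ∨ b ∉ S.1)), f S) +
      ∑ S ∈ univ.filter (fun S : {S : Finset (Fin K) // S.Nonempty} =>
          j ∈ S.1 ∧ a ∈ S.1 ∧ b ∈ S.1), f S := by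
  classical
  rw [← Finset.sum_filter_add_sum_filter_not
    (univ.filter (fun S : {S : Finset (Fin K) // S.Nonempty} => j ∈ S.1))
    (fun S => a ∈ S.1 ∧ b ∈ S.1) f, Finset.filter_filter, Finset.filter_filter, add_comm]
  congr 1
  · exact Finset.sum_congr (Finset.filter_congr (by intro x _; tauto)) (fun _ _ => rfl)

lemma card_obs' (n : ℕ) (p : {S : Finset (Fin K) // S.Nonempty} → Prop) [DecidablePred p] :
    (Fintype.card (Fin n → ∀ T : {S : {S : Finset (Fin K) // S.Nonempty} // p S}, V T.1) : ℝ) =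
      (∏ S ∈ univ.filter p, (Fintype.card (V S) : ℝ)) ^ n := by
  classical
  rw [Fintype.card_fun, Fintype.card_pi, Fintype.card_fin]
  push_cast
  rw [Finset.prod_subtype (p := p) (univ.filter p) (fun x => by simp)
    (fun S => (Fintype.card (V S) : ℝ))]

lemma logb_obs' (n : ℕ) (p : {S : Finset (Fin K) // S.Nonempty} → Prop) [DecidablePred p] :
    Real.logb 2
        (Fintype.card (Fin n → ∀ T : {S : {S : Finset (Fin K) // S.Nonempty} // p S}, V T.1)) =
      n * ∑ S ∈ univ.filter p, Real.logb 2 (Fintype.card (V S)) := by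
  classical
  rw [card_obs', Real.logb_pow, Real.logb_prod]
  intro S _
  have := Fintype.card_pos (α := V S)
  positivity

end Aux

set_option maxHeartbeats 1000000 in
/-- Converse for the combination network with messages
`M_{\bar K}` (rate `R1`) and `M_{\bar{K-1}}` (rate `R2`): for every private
receiver `j` (0-indexed `(j:ℕ) < K-2`),
`2 R2 + 2 R1 ≤ C_{↓_{W_j}{\bar{K-1},\bar K}} + C_{W_K} + C_{W_{K-1}}`,
where `C_S = log₂ |V S|`.  In addition the key combinatorial facts hold:
`W_K ∩ W_{K-1} ∩ W_j = ↑_{W_j}{K-1.K}` and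
`C_{W_j} = C_{↓_{W_j}{\bar{K-1},\bar K}} + C_{↑_{W_j}{K-1.K}}`
(receivers `K-1`, `K` are the 0-indexed `⟨K-2,_⟩`, `⟨K-1,_⟩`). -/
theorem stmt_12 (K : ℕ) (hK : 3 ≤ K)
    (V : {S : Finset (Fin K) // S.Nonempty} → Type)
    [∀ S, Fintype (V S)] [∀ S, Nonempty (V S)]
    (R1 R2 : ℝ) (hach : TwoOrderAchievable K V R1 R2) :
    (∀ j : Fin K, (j : ℕ) < K - 2 →
      2 * R2 + 2 * R1 ≤
        (∑ S ∈ univ.filter (fun S : {S : Finset (Fin K) // S.Nonempty} =>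
            j ∈ S.1 ∧ ((⟨K - 2, by omega⟩ : Fin K) ∉ S.1 ∨ (⟨K - 1, by omega⟩ : Fin K) ∉ S.1)),
          Real.logb 2 (Fintype.card (V S))) +
        (∑ S ∈ univ.filter (fun S : {S : Finset (Fin K) // S.Nonempty} =>
            (⟨K - 1, by omega⟩ : Fin K) ∈ S.1),
          Real.logb 2 (Fintype.card (V S))) +
        ∑ S ∈ univ.filter (fun S : {S : Finset (Fin K) // S.Nonempty} =>
            (⟨K - 2, by omega⟩ : Fin K) ∈ S.1),
          Real.logb 2 (Fintype.card (V S))) ∧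
    (∀ j : Fin K, (j : ℕ) < K - 2 →
      ({S : {S : Finset (Fin K) // S.Nonempty} | (⟨K - 1, by omega⟩ : Fin K) ∈ S.1} ∩
          {S : {S : Finset (Fin K) // S.Nonempty} | (⟨K - 2, by omega⟩ : Fin K) ∈ S.1} ∩
          {S : {S : Finset (Fin K) // S.Nonempty} | j ∈ S.1} =
        {S : {S : Finset (Fin K) // S.Nonempty} |
          j ∈ S.1 ∧ (⟨K - 2, by omega⟩ : Fin K) ∈ S.1 ∧ (⟨K - 1, by omega⟩ : Fin K) ∈ S.1}) ∧
      (∑ S ∈ univ.filter (fun S : {S : Finset (Fin K) // S.Nonempty} => j ∈ S.1),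
          Real.logb 2 (Fintype.card (V S))) =
        (∑ S ∈ univ.filter (fun S : {S : Finset (Fin K) // S.Nonempty} =>
            j ∈ S.1 ∧ ((⟨K - 2, by omega⟩ : Fin K) ∉ S.1 ∨ (⟨K - 1, by omega⟩ : Fin K) ∉ S.1)),
          Real.logb 2 (Fintype.card (V S))) +
        ∑ S ∈ univ.filter (fun S : {S : Finset (Fin K) // S.Nonempty} =>
            j ∈ S.1 ∧ (⟨K - 2, by omega⟩ : Fin K) ∈ S.1 ∧ (⟨K - 1, by omega⟩ : Fin K) ∈ S.1),
          Real.logb 2 (Fintype.card (V S))) := by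
  have hK2 : K - 2 < K := by omega
  have hK1 : K - 1 < K := by omega
  constructor
  · intro j hj
    apply real_le_of_forall_pos'
    intro δ hδ
    show 2 * R2 + 2 * R1 ≤
        ((∑ S ∈ univ.filter (fun S : {S : Finset (Fin K) // S.Nonempty} =>
            j ∈ S.1 ∧ ((⟨K - 2, hK2⟩ : Fin K) ∉ S.1 ∨ (⟨K - 1, hK1⟩ : Fin K) ∉ S.1)),
          Real.logb 2 (Fintype.card (V S))) +
        (∑ S ∈ univ.filter (fun S : {S : Finset (Fin K) // S.Nonempty} =>
            (⟨K - 1, hK1⟩ : Fin K) ∈ S.1),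
          Real.logb 2 (Fintype.card (V S))) +
        ∑ S ∈ univ.filter (fun S : {S : Finset (Fin K) // S.Nonempty} =>
            (⟨K - 2, hK2⟩ : Fin K) ∈ S.1),
          Real.logb 2 (Fintype.card (V S))) + δ
    set ε := min (1/2:ℝ) (δ/10) with hεdef
    have hε0 : 0 < ε := lt_min (by norm_num) (by linarith)
    have hε2 : ε ≤ 1/2 := min_le_left _ _
    have hε10 : 10 * ε ≤ δ := by
      have := min_le_right (1/2:ℝ) (δ/10); linarith
    obtain ⟨n, M1, M2, hn, hM1, hM2, hR1, hR2, enc, dec, herr⟩ := hach ε hε0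
    set G : Finset (Fin M1 × Fin M2) := univ.filter (fun mm : Fin M1 × Fin M2 =>
        ((∀ i : Fin K, (i : ℕ) < K - 1 →
              (dec i (fun t T => enc mm.1 mm.2 t T.1)).1 = mm.1) ∧
           (∀ i : Fin K, (i : ℕ) ≠ K - 2 →
              (dec i (fun t T => enc mm.1 mm.2 t T.1)).2 = mm.2))) with hGdef
    -- good set is large
    have hcards : G.card + (univ.filter (fun mm : Fin M1 × Fin M2 =>
        ¬ ((∀ i : Fin K, (i : ℕ) < K - 1 →
              (dec i (fun t T => enc mm.1 mm.2 t T.1)).1 = mm.1) ∧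
           (∀ i : Fin K, (i : ℕ) ≠ K - 2 →
              (dec i (fun t T => enc mm.1 mm.2 t T.1)).2 = mm.2)))).card = M1 * M2 := by
      have := Finset.card_filter_add_card_filter_not
        (s := (univ : Finset (Fin M1 × Fin M2)))
        (p := fun mm : Fin M1 × Fin M2 =>
          ((∀ i : Fin K, (i : ℕ) < K - 1 →
                (dec i (fun t T => enc mm.1 mm.2 t T.1)).1 = mm.1) ∧
             (∀ i : Fin K, (i : ℕ) ≠ K - 2 →
                (dec i (fun t T => enc mm.1 mm.2 t T.1)).2 = mm.2)))
      simpa [Fintype.card_prod] using this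
    have hMM1 : (1:ℝ) ≤ (M1:ℝ) * M2 := by
      have h1 : (1:ℝ) ≤ (M1:ℝ) := by exact_mod_cast hM1
      have h2 : (1:ℝ) ≤ (M2:ℝ) := by exact_mod_cast hM2
      nlinarith
    have hG : (1-ε) * ((M1:ℝ) * M2) ≤ (G.card : ℝ) := by
      have h2 : (G.card : ℝ) + ((univ.filter (fun mm : Fin M1 × Fin M2 =>
        ¬ ((∀ i : Fin K, (i : ℕ) < K - 1 →
              (dec i (fun t T => enc mm.1 mm.2 t T.1)).1 = mm.1) ∧
           (∀ i : Fin K, (i : ℕ) ≠ K - 2 →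
              (dec i (fun t T => enc mm.1 mm.2 t T.1)).2 = mm.2)))).card : ℝ)
          = (M1:ℝ) * M2 := by exact_mod_cast hcards
      nlinarith [herr]
    have hGpos : (0:ℝ) < (G.card : ℝ) := by nlinarith
    have hjlt : (j:ℕ) < K - 1 := by omega
    have hjne : (j:ℕ) ≠ K - 2 := by omega
    have halt : (((⟨K - 2, hK2⟩ : Fin K)) : ℕ) < K - 1 := by simp; omega
    have hbne : (((⟨K - 1, hK1⟩ : Fin K)) : ℕ) ≠ K - 2 := by simp; omega
    -- injection via receiver j
    have hA : G.card ≤ Fintype.card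
        (Fin n → ∀ T : {S : {S : Finset (Fin K) // S.Nonempty} // j ∈ S.1}, V T.1) := by
      classical
      have h := Finset.card_le_card_of_injOn
        (s := G) (t := (univ : Finset
          (Fin n → ∀ T : {S : {S : Finset (Fin K) // S.Nonempty} // j ∈ S.1}, V T.1)))
        (f := fun mm : Fin M1 × Fin M2 =>
          (fun t T => enc mm.1 mm.2 t T.1 :
            Fin n → ∀ T : {S : {S : Finset (Fin K) // S.Nonempty} // j ∈ S.1}, V T.1))
        (fun a _ => mem_univ _) ?_
      · rwa [Finset.card_univ] at h
      · intro mm hmm mm' hmm' heq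
        replace heq : (fun (t : Fin n)
            (T : {S : {S : Finset (Fin K) // S.Nonempty} // j ∈ S.1}) =>
              enc mm.1 mm.2 t T.1) = (fun (t : Fin n)
            (T : {S : {S : Finset (Fin K) // S.Nonempty} // j ∈ S.1}) =>
              enc mm'.1 mm'.2 t T.1) := heq
        have hmmG : mm ∈ G := hmm
        have hmmG' : mm' ∈ G := hmm'
        rw [hGdef, Finset.mem_filter] at hmmG hmmG'
        obtain ⟨-, h1, h2⟩ := hmmG
        obtain ⟨-, h1', h2'⟩ := hmmG'
        have e1 := h1 j hjlt
        have e2 := h2 j hjne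
        rw [heq] at e1 e2
        exact Prod.ext (e1.symm.trans (h1' j hjlt)) (e2.symm.trans (h2' j hjne))
    -- injection via receivers K-1 and K
    have hB : G.card ≤ Fintype.card
        (Fin n → ∀ T : {S : {S : Finset (Fin K) // S.Nonempty} //
            (⟨K - 2, hK2⟩ : Fin K) ∈ S.1 ∨ (⟨K - 1, hK1⟩ : Fin K) ∈ S.1}, V T.1) := by
      classical
      have h := Finset.card_le_card_of_injOn
        (s := G) (t := (univ : Finset
          (Fin n → ∀ T : {S : {S : Finset (Fin K) // S.Nonempty} //
            (⟨K - 2, hK2⟩ : Fin K) ∈ S.1 ∨ (⟨K - 1, hK1⟩ : Fin K) ∈ S.1}, V T.1)))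
        (f := fun mm : Fin M1 × Fin M2 =>
          (fun t T => enc mm.1 mm.2 t T.1 :
            Fin n → ∀ T : {S : {S : Finset (Fin K) // S.Nonempty} //
              (⟨K - 2, hK2⟩ : Fin K) ∈ S.1 ∨ (⟨K - 1, hK1⟩ : Fin K) ∈ S.1}, V T.1))
        (fun a _ => mem_univ _) ?_
      · rwa [Finset.card_univ] at h
      · intro mm hmm mm' hmm' heq
        replace heq : (fun (t : Fin n)
            (T : {S : {S : Finset (Fin K) // S.Nonempty} //
              (⟨K - 2, hK2⟩ : Fin K) ∈ S.1 ∨ (⟨K - 1, hK1⟩ : Fin K) ∈ S.1}) =>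
              enc mm.1 mm.2 t T.1) = (fun (t : Fin n)
            (T : {S : {S : Finset (Fin K) // S.Nonempty} //
              (⟨K - 2, hK2⟩ : Fin K) ∈ S.1 ∨ (⟨K - 1, hK1⟩ : Fin K) ∈ S.1}) =>
              enc mm'.1 mm'.2 t T.1) := heq
        have heqa : (fun (t : Fin n)
            (T : {S : {S : Finset (Fin K) // S.Nonempty} // (⟨K - 2, hK2⟩ : Fin K) ∈ S.1}) =>
              enc mm.1 mm.2 t T.1) = (fun (t : Fin n)
            (T : {S : {S : Finset (Fin K) // S.Nonempty} // (⟨K - 2, hK2⟩ : Fin K) ∈ S.1}) =>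
              enc mm'.1 mm'.2 t T.1) := by
          funext t T
          exact congrFun (congrFun heq t) ⟨T.1, Or.inl T.2⟩
        have heqb : (fun (t : Fin n)
            (T : {S : {S : Finset (Fin K) // S.Nonempty} // (⟨K - 1, hK1⟩ : Fin K) ∈ S.1}) =>
              enc mm.1 mm.2 t T.1) = (fun (t : Fin n)
            (T : {S : {S : Finset (Fin K) // S.Nonempty} // (⟨K - 1, hK1⟩ : Fin K) ∈ S.1}) =>
              enc mm'.1 mm'.2 t T.1) := by
          funext t T
          exact congrFun (congrFun heq t) ⟨T.1, Or.inr T.2⟩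
        have hmmG : mm ∈ G := hmm
        have hmmG' : mm' ∈ G := hmm'
        rw [hGdef, Finset.mem_filter] at hmmG hmmG'
        obtain ⟨-, h1, h2⟩ := hmmG
        obtain ⟨-, h1', h2'⟩ := hmmG'
        have e1 := h1 ⟨K - 2, hK2⟩ halt
        have e2 := h2 ⟨K - 1, hK1⟩ hbne
        rw [heqa] at e1
        rw [heqb] at e2
        exact Prod.ext (e1.symm.trans (h1' ⟨K - 2, hK2⟩ halt))
          (e2.symm.trans (h2' ⟨K - 1, hK1⟩ hbne))
    -- pass to logs
    classical
    have hAr : Real.logb 2 (G.card) ≤ n * ∑ S ∈ univ.filter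
        (fun S : {S : Finset (Fin K) // S.Nonempty} => j ∈ S.1),
        Real.logb 2 (Fintype.card (V S)) := by
      rw [← logb_obs' (V := V) n (fun S => j ∈ S.1)]
      exact Real.logb_le_logb_of_le one_lt_two hGpos (by exact_mod_cast hA)
    have hBr : Real.logb 2 (G.card) ≤ n * ∑ S ∈ univ.filter
        (fun S : {S : Finset (Fin K) // S.Nonempty} =>
          (⟨K - 2, hK2⟩ : Fin K) ∈ S.1 ∨ (⟨K - 1, hK1⟩ : Fin K) ∈ S.1),
        Real.logb 2 (Fintype.card (V S)) := by
      rw [← logb_obs' (V := V) n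
        (fun S => (⟨K - 2, hK2⟩ : Fin K) ∈ S.1 ∨ (⟨K - 1, hK1⟩ : Fin K) ∈ S.1)]
      exact Real.logb_le_logb_of_le one_lt_two hGpos (by exact_mod_cast hB)
    -- sum manipulation
    have hCnn : ∀ S : {S : Finset (Fin K) // S.Nonempty},
        0 ≤ Real.logb 2 (Fintype.card (V S)) := fun S =>
      Real.logb_nonneg one_lt_two (by exact_mod_cast Fintype.card_pos (α := V S))
    have hunion : (∑ S ∈ univ.filter
          (fun S : {S : Finset (Fin K) // S.Nonempty} =>
            (⟨K - 2, hK2⟩ : Fin K) ∈ S.1 ∨ (⟨K - 1, hK1⟩ : Fin K) ∈ S.1),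
          Real.logb 2 (Fintype.card (V S))) +
        (∑ S ∈ univ.filter (fun S : {S : Finset (Fin K) // S.Nonempty} =>
            (⟨K - 2, hK2⟩ : Fin K) ∈ S.1) ∩
          univ.filter (fun S : {S : Finset (Fin K) // S.Nonempty} =>
            (⟨K - 1, hK1⟩ : Fin K) ∈ S.1),
          Real.logb 2 (Fintype.card (V S))) =
        (∑ S ∈ univ.filter (fun S : {S : Finset (Fin K) // S.Nonempty} =>
            (⟨K - 2, hK2⟩ : Fin K) ∈ S.1),
          Real.logb 2 (Fintype.card (V S))) +
        ∑ S ∈ univ.filter (fun S : {S : Finset (Fin K) // S.Nonempty} =>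
            (⟨K - 1, hK1⟩ : Fin K) ∈ S.1),
          Real.logb 2 (Fintype.card (V S)) := by
      rw [Finset.filter_or]
      exact Finset.sum_union_inter
    have hsplitj := split_sum' j ⟨K - 2, hK2⟩ ⟨K - 1, hK1⟩
      (fun S => Real.logb 2 (Fintype.card (V S)))
    have hup : (∑ S ∈ univ.filter (fun S : {S : Finset (Fin K) // S.Nonempty} =>
          j ∈ S.1 ∧ (⟨K - 2, hK2⟩ : Fin K) ∈ S.1 ∧ (⟨K - 1, hK1⟩ : Fin K) ∈ S.1),
        Real.logb 2 (Fintype.card (V S))) ≤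
        ∑ S ∈ univ.filter (fun S : {S : Finset (Fin K) // S.Nonempty} =>
            (⟨K - 2, hK2⟩ : Fin K) ∈ S.1) ∩
          univ.filter (fun S : {S : Finset (Fin K) // S.Nonempty} =>
            (⟨K - 1, hK1⟩ : Fin K) ∈ S.1),
          Real.logb 2 (Fintype.card (V S)) := by
      apply Finset.sum_le_sum_of_subset_of_nonneg
      · intro S hS
        simp only [Finset.mem_filter, Finset.mem_inter, Finset.mem_univ, true_and] at *
        tauto
      · exact fun S _ _ => hCnn S
    -- rate bounds
    have hMlog : Real.logb 2 M1 + Real.logb 2 M2 ≤ Real.logb 2 (G.card) + 3 * ε := by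
      have hMMpos : (0:ℝ) < (M1:ℝ) * M2 := by nlinarith
      have h1 : Real.logb 2 ((1-ε) * ((M1:ℝ) * M2)) ≤ Real.logb 2 (G.card) :=
        Real.logb_le_logb_of_le one_lt_two (by nlinarith) hG
      rw [Real.logb_mul (by nlinarith) (by nlinarith),
        Real.logb_mul (by positivity) (by positivity)] at h1
      have := neg_logb_le' hε0 hε2
      linarith
    have hnpos : (0:ℝ) < (n:ℝ) := by exact_mod_cast hn
    have hn1 : (1:ℝ) ≤ (n:ℝ) := by exact_mod_cast hn
    have hT0 : 0 ≤ (∑ S ∈ univ.filter (fun S : {S : Finset (Fin K) // S.Nonempty} =>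
            j ∈ S.1 ∧ ((⟨K - 2, hK2⟩ : Fin K) ∉ S.1 ∨ (⟨K - 1, hK1⟩ : Fin K) ∉ S.1)),
          Real.logb 2 (Fintype.card (V S))) +
        (∑ S ∈ univ.filter (fun S : {S : Finset (Fin K) // S.Nonempty} =>
            (⟨K - 1, hK1⟩ : Fin K) ∈ S.1),
          Real.logb 2 (Fintype.card (V S))) +
        ∑ S ∈ univ.filter (fun S : {S : Finset (Fin K) // S.Nonempty} =>
            (⟨K - 2, hK2⟩ : Fin K) ∈ S.1),
          Real.logb 2 (Fintype.card (V S)) := by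
      have n1 := Finset.sum_nonneg (s := univ.filter
        (fun S : {S : Finset (Fin K) // S.Nonempty} =>
            j ∈ S.1 ∧ ((⟨K - 2, hK2⟩ : Fin K) ∉ S.1 ∨ (⟨K - 1, hK1⟩ : Fin K) ∉ S.1)))
        (fun S _ => hCnn S)
      have n2 := Finset.sum_nonneg (s := univ.filter
        (fun S : {S : Finset (Fin K) // S.Nonempty} => (⟨K - 1, hK1⟩ : Fin K) ∈ S.1))
        (fun S _ => hCnn S)
      have n3 := Finset.sum_nonneg (s := univ.filter
        (fun S : {S : Finset (Fin K) // S.Nonempty} => (⟨K - 2, hK2⟩ : Fin K) ∈ S.1))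
        (fun S _ => hCnn S)
      linarith
    -- put everything together
    set T := (∑ S ∈ univ.filter (fun S : {S : Finset (Fin K) // S.Nonempty} =>
            j ∈ S.1 ∧ ((⟨K - 2, hK2⟩ : Fin K) ∉ S.1 ∨ (⟨K - 1, hK1⟩ : Fin K) ∉ S.1)),
          Real.logb 2 (Fintype.card (V S))) +
        (∑ S ∈ univ.filter (fun S : {S : Finset (Fin K) // S.Nonempty} =>
            (⟨K - 1, hK1⟩ : Fin K) ∈ S.1),
          Real.logb 2 (Fintype.card (V S))) +
        ∑ S ∈ univ.filter (fun S : {S : Finset (Fin K) // S.Nonempty} =>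
            (⟨K - 2, hK2⟩ : Fin K) ∈ S.1),
          Real.logb 2 (Fintype.card (V S)) with hTdef
    have h2L : 2 * (Real.logb 2 M1 + Real.logb 2 M2) ≤ (n:ℝ) * T + 6 * ε := by
      have hsum : (∑ S ∈ univ.filter
            (fun S : {S : Finset (Fin K) // S.Nonempty} => j ∈ S.1),
            Real.logb 2 (Fintype.card (V S))) +
          (∑ S ∈ univ.filter (fun S : {S : Finset (Fin K) // S.Nonempty} =>
              (⟨K - 2, hK2⟩ : Fin K) ∈ S.1 ∨ (⟨K - 1, hK1⟩ : Fin K) ∈ S.1),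
            Real.logb 2 (Fintype.card (V S))) ≤ T := by
        rw [hsplitj, hTdef]
        linarith
      nlinarith [hAr, hBr, hMlog, mul_le_mul_of_nonneg_left hsum (le_of_lt hnpos)]
    have hdiv : 2 * (Real.logb 2 M1 + Real.logb 2 M2) / n ≤ T + 6 * ε := by
      rw [div_le_iff₀ hnpos]
      nlinarith [mul_nonneg (by linarith : (0:ℝ) ≤ 6*ε) (by linarith : (0:ℝ) ≤ (n:ℝ) - 1)]
    have hsplitdiv : 2 * (Real.logb 2 M1 + Real.logb 2 M2) / n =
        2 * (Real.logb 2 M1 / n) + 2 * (Real.logb 2 M2 / n) := by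
      field_simp
    linarith [hR1, hR2, hε10, hdiv, hsplitdiv.symm.le, hsplitdiv.le]
  · intro j hj
    refine ⟨?_, split_sum' j _ _ _⟩
    ext S
    simp only [Set.mem_inter_iff, Set.mem_setOf_eq]
    tauto
end
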